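/- Let n ≥ 1, l* ∈ {1,…,n}, ρ ∈ ℝ, and let v ∈ ℝ^n be entrywise nonnegative. Then the following are equivalent: (i) there exists z ∈ ℝ^n with z ≥ 0 entrywise, z unimodal with peak at l*, ‖z‖₂ = 1 and ⟨z, v⟩ ≥ ρ; (ii) there exists z ∈ ℝ^n (not necessarily nonnegative) with z unimodal with peak at l*, ‖z‖₂ = 1 and ⟨z, v⟩ ≥ ρ. In other words, the entrywise nonnegativity constraint is redundant in the feasibility problem. -/

import Mathlib

open scoped BigOperators

/-- Euclidean (ℓ₂) norm of a vector in ℝⁿ. -/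
noncomputable def l2norm {n : ℕ} (x : Fin n → ℝ) : ℝ := Real.sqrt (∑ i, x i ^ 2)

/-- Standard inner product on ℝⁿ. -/
noncomputable def inprod {n : ℕ} (x y : Fin n → ℝ) : ℝ := ∑ i, x i * y i

/-- `z` is unimodal with peak at (0-based) index `l`: entries are non-increasing from `l`
rightwards and non-decreasing up to `l`. -/
def Unimodal {n : ℕ} (z : Fin n → ℝ) (l : Fin n) : Prop :=
  (∀ j : ℕ, ∀ h : j + 1 < n, (l : ℕ) ≤ j → z ⟨j + 1, h⟩ ≤ z ⟨j, Nat.lt_of_succ_lt h⟩) ∧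
  (∀ j : ℕ, ∀ h : j + 1 < n, j + 1 ≤ (l : ℕ) → z ⟨j, Nat.lt_of_succ_lt h⟩ ≤ z ⟨j + 1, h⟩)

/-- for nonnegative v, feasibility of the unimodal problem with the entrywise
nonnegativity constraint is equivalent to feasibility without it. -/
theorem stmt6 {n : ℕ} (hn : 1 ≤ n) (lstar : Fin n) (ρ : ℝ)
    {v : Fin n → ℝ} (hv : ∀ i, 0 ≤ v i) :
    (∃ z : Fin n → ℝ, (∀ i, 0 ≤ z i) ∧ Unimodal z lstar ∧ l2norm z = 1 ∧ ρ ≤ inprod z v) ↔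
      (∃ z : Fin n → ℝ, Unimodal z lstar ∧ l2norm z = 1 ∧ ρ ≤ inprod z v) := by
  constructor
  · rintro ⟨z, _, h⟩; exact ⟨z, h⟩
  rintro ⟨z, ⟨hu1, hu2⟩, hnorm, hip⟩
  -- sum of squares of z is 1
  have hsq : ∑ i, z i ^ 2 = 1 := by
    have h0 : (0:ℝ) ≤ ∑ i, z i ^ 2 := Finset.sum_nonneg fun i _ => sq_nonneg _
    have := congrArg (fun t => t ^ 2) hnorm
    simpa [l2norm, Real.sq_sqrt h0] using this
  set w : Fin n → ℝ := fun i => max (z i) 0 with hw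
  have hwnn : ∀ i, 0 ≤ w i := fun i => le_max_right _ _
  have hwsq_le : ∀ i, w i ^ 2 ≤ z i ^ 2 := by
    intro i
    rcases le_total (z i) 0 with h | h
    · simp [hw, max_eq_right h]
      positivity
    · simp [hw, max_eq_left h]
  set S : ℝ := ∑ i, w i ^ 2 with hS
  have hS0 : 0 ≤ S := Finset.sum_nonneg fun i _ => sq_nonneg _
  have hS1 : S ≤ 1 := by
    rw [← hsq]; exact Finset.sum_le_sum fun i _ => hwsq_le i
  have hipw : inprod z v ≤ inprod w v := by
    apply Finset.sum_le_sum
    intro i _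
    exact mul_le_mul_of_nonneg_right (le_max_left _ _) (hv i)
  have hipw0 : 0 ≤ inprod w v :=
    Finset.sum_nonneg fun i _ => mul_nonneg (hwnn i) (hv i)
  by_cases hSpos : 0 < S
  · -- scale w
    set c : ℝ := Real.sqrt S with hc
    have hc0 : 0 < c := Real.sqrt_pos.2 hSpos
    have hc1 : c ≤ 1 := by
      rw [hc, show (1:ℝ) = Real.sqrt 1 by simp]
      exact Real.sqrt_le_sqrt hS1
    refine ⟨fun i => c⁻¹ * w i, fun i => mul_nonneg (by positivity) (hwnn i), ⟨?_, ?_⟩, ?_, ?_⟩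
    · intro j h hj
      exact mul_le_mul_of_nonneg_left
        (max_le_max (hu1 j h hj) le_rfl) (by positivity)
    · intro j h hj
      exact mul_le_mul_of_nonneg_left
        (max_le_max (hu2 j h hj) le_rfl) (by positivity)
    · have : ∑ i, (c⁻¹ * w i) ^ 2 = c⁻¹ ^ 2 * S := by
        rw [hS, Finset.mul_sum]; congr 1; ext i; ring
      rw [l2norm, this, Real.sqrt_mul (by positivity), ← hc,
        Real.sqrt_sq (by positivity : (0:ℝ) ≤ c⁻¹)]
      field_simp
    · have heq : inprod (fun i => c⁻¹ * w i) v = c⁻¹ * inprod w v := by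
        rw [inprod, inprod, Finset.mul_sum]; congr 1; ext i; ring
      rw [heq]
      have h1 : inprod w v ≤ c⁻¹ * inprod w v := by
        nlinarith [mul_le_mul_of_nonneg_right (one_le_inv_iff₀.2 ⟨hc0, hc1⟩ : 1 ≤ c⁻¹) hipw0]
      linarith
  · -- w = 0, so z ≤ 0 everywhere, hence ⟨z,v⟩ ≤ 0; use indicator at lstar
    have hSz : S = 0 := le_antisymm (not_lt.1 hSpos) hS0
    have hz0 : ∀ i, z i ≤ 0 := by
      intro i
      have := Finset.sum_eq_zero_iff_of_nonneg (fun i _ => sq_nonneg (w i)) |>.1 hSz i (Finset.mem_univ i)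
      have hwi : w i = 0 := by nlinarith [sq_nonneg (w i)]
      have := le_max_left (z i) 0
      rw [← hw] at *
      linarith [le_max_left (z i) 0, hwi ▸ (le_max_left (z i) 0)]
    have hiz : inprod z v ≤ 0 :=
      Finset.sum_nonpos fun i _ => mul_nonpos_of_nonpos_of_nonneg (hz0 i) (hv i)
    refine ⟨fun i => if i = lstar then 1 else 0, ?_, ⟨?_, ?_⟩, ?_, ?_⟩
    · intro i; dsimp only; split_ifs <;> norm_num
    · intro j h hj
      have : (⟨j+1, h⟩ : Fin n) ≠ lstar := by
        intro he
        have : (lstar : ℕ) = j + 1 := by rw [← he]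
        omega
      dsimp only
      rw [if_neg this]
      split_ifs <;> norm_num
    · intro j h hj
      have : (⟨j, Nat.lt_of_succ_lt h⟩ : Fin n) ≠ lstar := by
        intro he
        have : (lstar : ℕ) = j := by rw [← he]
        omega
      dsimp only
      rw [if_neg this]
      split_ifs <;> norm_num
    · rw [l2norm]
      have : ∑ i, (if i = lstar then (1:ℝ) else 0) ^ 2 = 1 := by
        rw [Finset.sum_eq_single lstar]
        · simp
        · intro b _ hb; simp [hb]
        · simp
      rw [this, Real.sqrt_one]
    · have : inprod (fun i => if i = lstar then (1:ℝ) else 0) v = v lstar := by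
        rw [inprod, Finset.sum_eq_single lstar]
        · simp
        · intro b _ hb; simp [hb]
        · simp
      rw [this]
      linarith [hv lstar]
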